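/- Let χ̂ > 0 and P : ℝ → [1/(2+χ̂), 1] be continuous. Define 𝒰(t) = [ (1+χ̂)·∫_{-∞}^t exp(-∫_l^t (1 + χ̂·P(s)) ds) dl ]^{-1}. Then 2/(2+χ̂) ≤ 𝒰(t) ≤ 1 for all t ∈ ℝ. -/

import Mathlib

open MeasureTheory

private lemma exp_lin_hasDerivAt (a t l : ℝ) (ha : a ≠ 0) :
    HasDerivAt (fun l => a⁻¹ * Real.exp (a * (l - t))) (Real.exp (a * (l - t))) l := by
  have h : HasDerivAt (fun l : ℝ => a * (l - t)) a l := by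
    simpa using ((hasDerivAt_id l).sub_const t).const_mul a
  have h2 := h.exp.const_mul a⁻¹
  refine h2.congr_deriv ?_
  have hinv : a⁻¹ * a = 1 := inv_mul_cancel₀ ha
  linear_combination (Real.exp (a * (l - t))) * hinv

private lemma exp_lin_intervalIntegral (a t y z : ℝ) (ha : a ≠ 0) :
    ∫ l in y..z, Real.exp (a * (l - t)) =
      a⁻¹ * Real.exp (a * (z - t)) - a⁻¹ * Real.exp (a * (y - t)) := by
  apply intervalIntegral.integral_eq_sub_of_hasDerivAt
  · exact fun x _ => exp_lin_hasDerivAt a t x ha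
  · exact (Real.continuous_exp.comp (by continuity)).intervalIntegrable y z

private lemma exp_lin_integrableOn_Iic {a : ℝ} (ha : 0 < a) (t : ℝ) :
    IntegrableOn (fun l => Real.exp (a * (l - t))) (Set.Iic t) := by
  refine integrableOn_Iic_of_intervalIntegral_norm_bounded a⁻¹ t
    (fun y => ((Real.continuous_exp.comp (by continuity)).intervalIntegrable y t).1)
    Filter.tendsto_id (Filter.eventually_of_mem (Filter.Iic_mem_atBot t) fun y hy => ?_)
  simp only [Real.norm_eq_abs, abs_of_nonneg (Real.exp_pos _).le]
  rw [exp_lin_intervalIntegral a t y t ha.ne']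
  simp only [sub_self, mul_zero, Real.exp_zero, mul_one]
  have h1 : (0:ℝ) < a⁻¹ := inv_pos.mpr ha
  nlinarith [Real.exp_pos (a * (y - t)), Real.exp_pos (a * (t - t))]

private lemma exp_lin_integral_Iic {a : ℝ} (ha : 0 < a) (t : ℝ) :
    ∫ l in Set.Iic t, Real.exp (a * (l - t)) = a⁻¹ := by
  refine tendsto_nhds_unique
    (MeasureTheory.intervalIntegral_tendsto_integral_Iic t
      (exp_lin_integrableOn_Iic ha t) Filter.tendsto_id) ?_
  have hval : ∀ y : ℝ, ∫ l in y..t, Real.exp (a * (l - t)) =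
      a⁻¹ - a⁻¹ * Real.exp (a * (y - t)) := by
    intro y
    rw [exp_lin_intervalIntegral a t y t ha.ne']
    simp
  simp only [hval]
  have h1 : Filter.Tendsto (fun y : ℝ => a * (y - t)) Filter.atBot Filter.atBot :=
    (Filter.tendsto_atBot_add_const_right _ (-t) Filter.tendsto_id).const_mul_atBot ha
  have h2 : Filter.Tendsto (fun y : ℝ => a⁻¹ - a⁻¹ * Real.exp (a * (y - t)))
      Filter.atBot (nhds (a⁻¹ - a⁻¹ * 0)) :=
    (((Real.tendsto_exp_atBot.comp h1).const_mul a⁻¹).const_sub a⁻¹)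
  simpa using h2

theorem Ucal_bounds (χ : ℝ) (hχ : 0 < χ) (P : ℝ → ℝ) (hP : Continuous P)
    (hlb : ∀ s, 1 / (2 + χ) ≤ P s) (hub : ∀ s, P s ≤ 1) :
    ∀ t : ℝ,
      2 / (2 + χ) ≤
        ((1 + χ) * ∫ l in Set.Iic t, Real.exp (-∫ s in Set.Ioc l t, (1 + χ * P s)))⁻¹ ∧
      ((1 + χ) * ∫ l in Set.Iic t, Real.exp (-∫ s in Set.Ioc l t, (1 + χ * P s)))⁻¹ ≤ 1 := by
  intro t
  set g : ℝ → ℝ := fun s => 1 + χ * P s with hg_def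
  have hg : Continuous g := continuous_const.add (continuous_const.mul hP)
  have h2χ : (0:ℝ) < 2 + χ := by linarith
  set a0 : ℝ := 1 + χ * (1 / (2 + χ)) with ha0_def
  set a1 : ℝ := 1 + χ with ha1_def
  have ha0 : 0 < a0 := by positivity
  have ha1 : 0 < a1 := by positivity
  -- pointwise bounds on g
  have hgl : ∀ s, a0 ≤ g s := fun s => by
    have := hlb s; simp only [hg_def, ha0_def]; nlinarith
  have hgu : ∀ s, g s ≤ a1 := fun s => by
    have := hub s; simp only [hg_def, ha1_def]; nlinarith
  -- bounds on the inner integral for l ≤ t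
  have hginti : ∀ y z : ℝ, IntervalIntegrable g volume y z := fun y z =>
    hg.intervalIntegrable y z
  have hinner : ∀ l, l ≤ t →
      a0 * (t - l) ≤ (∫ s in l..t, g s) ∧ (∫ s in l..t, g s) ≤ a1 * (t - l) := by
    intro l hl
    constructor
    · have h := intervalIntegral.integral_mono_on hl (intervalIntegrable_const (c := a0))
        (hginti l t) (fun x _ => hgl x)
      rw [intervalIntegral.integral_const, smul_eq_mul] at h
      rw [mul_comm]; exact h
    · have h := intervalIntegral.integral_mono_on hl (hginti l t)
        (intervalIntegrable_const (c := a1)) (fun x _ => hgu x)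
      rw [intervalIntegral.integral_const, smul_eq_mul] at h
      rw [mul_comm]; exact h
  -- continuous substitute for the integrand
  set φ : ℝ → ℝ := fun l => Real.exp (∫ s in t..l, g s) with hφ_def
  have hφcont : Continuous φ :=
    Real.continuous_exp.comp (intervalIntegral.continuous_primitive hginti t)
  have hφeq : ∀ l ∈ Set.Iic t,
      Real.exp (-∫ s in Set.Ioc l t, g s) = φ l := by
    intro l hl
    have h1 : (∫ s in Set.Ioc l t, g s) = ∫ s in l..t, g s :=
      (intervalIntegral.integral_of_le hl).symm
    have h2 : (∫ s in t..l, g s) = -∫ s in l..t, g s :=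
      (intervalIntegral.integral_symm l t)
    simp only [hφ_def]; rw [h1, h2]
  -- replace integrand
  have hIeq : (∫ l in Set.Iic t, Real.exp (-∫ s in Set.Ioc l t, (1 + χ * P s)))
      = ∫ l in Set.Iic t, φ l := by
    exact setIntegral_congr_fun measurableSet_Iic hφeq
  -- pointwise bounds on φ on Iic t
  have hφub : ∀ l ∈ Set.Iic t, φ l ≤ Real.exp (a0 * (l - t)) := by
    intro l hl
    have h2 : (∫ s in t..l, g s) = -∫ s in l..t, g s :=
      intervalIntegral.integral_symm l t
    have := (hinner l hl).1
    simp only [hφ_def]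
    apply Real.exp_le_exp.2
    rw [h2]; nlinarith
  have hφlb : ∀ l ∈ Set.Iic t, Real.exp (a1 * (l - t)) ≤ φ l := by
    intro l hl
    have h2 : (∫ s in t..l, g s) = -∫ s in l..t, g s :=
      intervalIntegral.integral_symm l t
    have := (hinner l hl).2
    simp only [hφ_def]
    apply Real.exp_le_exp.2
    rw [h2]; nlinarith
  -- integrability of φ on Iic t
  have hφint : IntegrableOn φ (Set.Iic t) := by
    refine Integrable.mono' (exp_lin_integrableOn_Iic ha0 t)
      (hφcont.aestronglyMeasurable.restrict) ?_
    refine (ae_restrict_iff' measurableSet_Iic).2 (Filter.Eventually.of_forall ?_)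
    intro l hl
    rw [Real.norm_eq_abs, abs_of_nonneg (Real.exp_pos _).le]
    exact hφub l hl
  -- bounds on the outer integral
  have hIub : (∫ l in Set.Iic t, φ l) ≤ a0⁻¹ := by
    rw [← exp_lin_integral_Iic ha0 t]
    exact setIntegral_mono_on hφint (exp_lin_integrableOn_Iic ha0 t)
      measurableSet_Iic hφub
  have hIlb : a1⁻¹ ≤ ∫ l in Set.Iic t, φ l := by
    rw [← exp_lin_integral_Iic ha1 t]
    exact setIntegral_mono_on (exp_lin_integrableOn_Iic ha1 t) hφint
      measurableSet_Iic hφlb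
  rw [hIeq]
  set I : ℝ := ∫ l in Set.Iic t, φ l
  have hx1 : 1 ≤ (1 + χ) * I := by
    have : a1 * a1⁻¹ ≤ a1 * I := by
      exact mul_le_mul_of_nonneg_left hIlb ha1.le
    rwa [mul_inv_cancel₀ ha1.ne'] at this
  have hx2 : (1 + χ) * I ≤ (2 + χ) / 2 := by
    have h1 : (1 + χ) * I ≤ (1 + χ) * a0⁻¹ :=
      mul_le_mul_of_nonneg_left hIub ha1.le
    have h2 : (1 + χ) * a0⁻¹ = (2 + χ) / 2 := by
      rw [ha0_def]
      field_simp
      ring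
    linarith
  have hxpos : 0 < (1 + χ) * I := lt_of_lt_of_le one_pos hx1
  constructor
  · have h3 : ((2 + χ) / 2)⁻¹ ≤ ((1 + χ) * I)⁻¹ :=
      inv_anti₀ hxpos hx2
    have h4 : ((2 + χ) / 2)⁻¹ = 2 / (2 + χ) := by
      rw [inv_div]
    linarith
  · exact inv_le_one_of_one_le₀ hx1
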